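/- The uniform matroid U_{2,5} is not 3-entropic: there is no probability distribution on {0,1,2}^5 with random variables X_1,…,X_5 such that the base-3 Shannon entropy satisfies H(X_S) = min(|S|, 2) for every subset S of {1,…,5}. -/

import Mathlib

open scoped Classical BigOperators

/-- Shannon entropy in base `q` of a probability mass function on a finite type. -/
noncomputable def shannonEntropy {α : Type*} [Fintype α] (q : ℝ) (μ : PMF α) : ℝ :=
  -∑ x : α, (μ x).toReal * Real.logb q (μ x).toReal

/-- Marginal of a distribution on `ι → α` on the coordinates in `S`. -/
noncomputable def marg {ι α : Type*} (μ : PMF (ι → α)) (S : Finset ι) :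
    PMF ({ i // i ∈ S } → α) :=
  μ.map fun x i => x i.1

section U25aux
set_option linter.unusedSectionVars false

open scoped ENNReal

variable {α β : Type*} [Fintype α] [Fintype β]

noncomputable def U25pr {α : Type*} (μ : PMF α) (x : α) : ℝ := (μ x).toReal

lemma U25pr_nonneg (μ : PMF α) (x : α) : 0 ≤ U25pr μ x := ENNReal.toReal_nonneg

lemma U25pr_ne_zero {μ : PMF α} {x : α} (h : μ x ≠ 0) : U25pr μ x ≠ 0 := by
  simp [U25pr, ENNReal.toReal_eq_zero_iff, h, PMF.apply_ne_top μ x]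

lemma U25pr_sum (μ : PMF α) : ∑ x, U25pr μ x = 1 := by
  have := μ.tsum_coe
  rw [tsum_fintype] at this
  have h2 := congrArg ENNReal.toReal this
  rw [ENNReal.toReal_sum (by intro a _; exact PMF.apply_ne_top μ a)] at h2
  simpa [U25pr] using h2

lemma U25entropy_def (μ : PMF α) :
    shannonEntropy 3 μ = -∑ x, U25pr μ x * Real.logb 3 (U25pr μ x) := rfl

lemma U25pr_map (μ : PMF α) (f : α → β) (y : β) :
    U25pr (μ.map f) y = ∑ x ∈ Finset.univ.filter (fun x => f x = y), U25pr μ x := by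
  show ((μ.map f) y).toReal = _
  rw [PMF.map_apply, tsum_fintype]
  rw [ENNReal.toReal_sum (by intro a _; split <;> simp [PMF.apply_ne_top])]
  rw [Finset.sum_filter]
  congr 1; ext x; split <;> split <;> simp_all [U25pr]

lemma U25pr_le_pr_map (μ : PMF α) (f : α → β) (x : α) :
    U25pr μ x ≤ U25pr (μ.map f) (f x) := by
  rw [U25pr_map]
  exact Finset.single_le_sum (fun i _ => U25pr_nonneg μ i) (by simp)

lemma U25entropy_map (μ : PMF α) (f : α → β) :
    shannonEntropy 3 (μ.map f)
      = -∑ x, U25pr μ x * Real.logb 3 (U25pr (μ.map f) (f x)) := by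
  rw [U25entropy_def, neg_inj]
  rw [← Finset.sum_fiberwise_of_maps_to (fun x (_ : x ∈ Finset.univ) => Finset.mem_univ (f x))
      (fun x => U25pr μ x * Real.logb 3 (U25pr (μ.map f) (f x)))]
  refine Finset.sum_congr rfl fun y _ => ?_
  rw [U25pr_map, Finset.sum_mul]
  refine Finset.sum_congr rfl fun x hx => ?_
  simp only [Finset.mem_filter] at hx
  rw [hx.2, U25pr_map]

/-- Equality in data processing: each support point carries the full mass of its fiber. -/
lemma U25map_eq_of_entropy_eq {μ : PMF α} {f : α → β}
    (h : shannonEntropy 3 (μ.map f) = shannonEntropy 3 μ) :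
    ∀ x, μ x ≠ 0 → U25pr μ x = U25pr (μ.map f) (f x) := by
  have hsum : ∑ x, U25pr μ x *
      (Real.logb 3 (U25pr (μ.map f) (f x)) - Real.logb 3 (U25pr μ x)) = 0 := by
    have h' := h
    rw [U25entropy_map, U25entropy_def, neg_inj] at h'
    simp only [mul_sub]
    rw [Finset.sum_sub_distrib, h', sub_self]
  have hterm : ∀ x ∈ Finset.univ (α := α),
      0 ≤ U25pr μ x * (Real.logb 3 (U25pr (μ.map f) (f x)) - Real.logb 3 (U25pr μ x)) := by
    intro x _
    rcases eq_or_lt_of_le (U25pr_nonneg μ x) with h0 | h0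
    · rw [← h0]; simp
    · have hle := U25pr_le_pr_map μ f x
      have : Real.logb 3 (U25pr μ x) ≤ Real.logb 3 (U25pr (μ.map f) (f x)) :=
        Real.logb_le_logb_of_le (by norm_num) (by linarith) hle
      nlinarith
  intro x hx
  have hx' : U25pr μ x ≠ 0 := U25pr_ne_zero hx
  have h0 : 0 < U25pr μ x := lt_of_le_of_ne (U25pr_nonneg μ x) (Ne.symm hx')
  have := (Finset.sum_eq_zero_iff_of_nonneg hterm).mp hsum x (Finset.mem_univ x)
  have hlog : Real.logb 3 (U25pr (μ.map f) (f x)) = Real.logb 3 (U25pr μ x) := by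
    rcases mul_eq_zero.mp this with h1 | h1
    · exact absurd h1 hx'
    · linarith
  have hle := U25pr_le_pr_map μ f x
  rcases eq_or_lt_of_le hle with h1 | h1
  · exact h1
  · exact absurd (Real.logb_lt_logb (b := 3) (by norm_num) h0 h1)
      (by rw [hlog]; exact lt_irrefl _)

/-- Under entropy equality, the map is injective on the support. -/
lemma U25inj_on_supp {μ : PMF α} {f : α → β}
    (h : shannonEntropy 3 (μ.map f) = shannonEntropy 3 μ)
    {x x' : α} (hx : μ x ≠ 0) (hx' : μ x' ≠ 0) (hf : f x = f x') : x = x' := by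
  by_contra hne
  have e1 := U25map_eq_of_entropy_eq h x hx
  have e2 := U25map_eq_of_entropy_eq h x' hx'
  rw [← hf] at e2
  have hsub : ({x, x'} : Finset α) ⊆ Finset.univ.filter (fun z => f z = f x) := by
    intro z hz
    simp only [Finset.mem_insert, Finset.mem_singleton] at hz
    rcases hz with rfl | rfl <;> simp [hf]
  have hge : U25pr μ x + U25pr μ x' ≤ U25pr (μ.map f) (f x) := by
    rw [U25pr_map]
    calc U25pr μ x + U25pr μ x' = ∑ z ∈ ({x, x'} : Finset α), U25pr μ z :=
          (Finset.sum_pair hne).symm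
      _ ≤ _ := Finset.sum_le_sum_of_subset_of_nonneg hsub (fun z _ _ => U25pr_nonneg μ z)
  have hx0' : 0 < U25pr μ x' := lt_of_le_of_ne (U25pr_nonneg μ x') (Ne.symm (U25pr_ne_zero hx'))
  linarith

/-- Maximum entropy forces full support. -/
lemma U25full_support (ν : PMF β)
    (h : shannonEntropy 3 ν = Real.logb 3 (Fintype.card β)) (y : β) : ν y ≠ 0 := by
  intro hy
  have hne : Nonempty β := ⟨y⟩
  have hn : 0 < ((Fintype.card β : ℕ):ℝ) := by exact_mod_cast Fintype.card_pos
  set n : ℝ := ((Fintype.card β : ℕ):ℝ) with hndef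
  have hlog3 : (0:ℝ) < Real.log 3 := Real.log_pos (by norm_num)
  have key : ∑ z : β, (U25pr ν z - 1/n) < ∑ z : β, U25pr ν z * Real.log (n * U25pr ν z) := by
    apply Finset.sum_lt_sum
    · intro z _
      rcases eq_or_lt_of_le (U25pr_nonneg ν z) with h0 | h0
      · rw [← h0]; simp; positivity
      · have hp : 0 < n * U25pr ν z := by positivity
        have h1 := Real.log_le_sub_one_of_pos (show (0:ℝ) < (n * U25pr ν z)⁻¹ by positivity)
        rw [Real.log_inv] at h1
        have h2 : 1 - (n * U25pr ν z)⁻¹ ≤ Real.log (n * U25pr ν z) := by linarith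
        have h3 := mul_le_mul_of_nonneg_left h2 (le_of_lt h0)
        have h4 : U25pr ν z * (1 - (n * U25pr ν z)⁻¹) = U25pr ν z - 1/n := by
          field_simp
        linarith
    · refine ⟨y, Finset.mem_univ y, ?_⟩
      have hpy : U25pr ν y = 0 := by simp [U25pr, hy]
      rw [hpy]; simp; positivity
  have hsum1 : ∑ z : β, (U25pr ν z - 1/n) = 0 := by
    rw [Finset.sum_sub_distrib, U25pr_sum, Finset.sum_const, Finset.card_univ, nsmul_eq_mul]
    rw [hndef]; field_simp; norm_num
  have hsum2 : ∑ z : β, U25pr ν z * Real.log (n * U25pr ν z)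
      = Real.log n + ∑ z : β, U25pr ν z * Real.log (U25pr ν z) := by
    have hz : ∀ z : β, U25pr ν z * Real.log (n * U25pr ν z)
        = U25pr ν z * Real.log n + U25pr ν z * Real.log (U25pr ν z) := by
      intro z
      rcases eq_or_lt_of_le (U25pr_nonneg ν z) with h0 | h0
      · rw [← h0]; simp
      · rw [Real.log_mul (ne_of_gt hn) (ne_of_gt h0)]; ring
    simp_rw [hz]
    rw [Finset.sum_add_distrib, ← Finset.sum_mul, U25pr_sum, one_mul]
  have hh : -∑ z : β, U25pr ν z * Real.log (U25pr ν z) = Real.log n := by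
    have h' := h
    rw [U25entropy_def] at h'
    simp only [Real.logb] at h'
    have e : ∑ z : β, U25pr ν z * (Real.log (U25pr ν z) / Real.log 3)
        = (∑ z : β, U25pr ν z * Real.log (U25pr ν z)) / Real.log 3 := by
      rw [Finset.sum_div]
      exact Finset.sum_congr rfl fun z _ => (mul_div_assoc _ _ _).symm
    rw [e] at h'
    have := congrArg (fun t : ℝ => t * Real.log 3) h'
    simp only [neg_div, neg_mul, div_mul_cancel₀ _ (ne_of_gt hlog3)] at this
    linarith [this]
  rw [hsum1, hsum2] at key
  linarith

end U25aux

/-- The uniform matroid `U_{2,5}` is not 3-entropic. -/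
theorem U25_not_three_entropic :
    ¬ ∃ μ : PMF (Fin 5 → Fin 3),
      ∀ S : Finset (Fin 5),
        shannonEntropy 3 (marg μ S) = (min S.card 2 : ℕ) := by
  rintro ⟨μ, hH⟩
  classical
  set μ' : PMF ({i // i ∈ (Finset.univ : Finset (Fin 5))} → Fin 3) := marg μ Finset.univ
    with hμ'
  -- `marg μ S` factors through `μ'`
  have hmarg : ∀ S : Finset (Fin 5), marg μ S
      = μ'.map (fun x (t : {t // t ∈ S}) => x ⟨t.1, Finset.mem_univ t.1⟩) := by
    intro S
    rw [hμ']
    simp only [marg]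
    rw [PMF.map_comp]
    rfl
  have H' : shannonEntropy 3 μ' = 2 := by
    have h := hH Finset.univ
    rw [hμ']
    rw [h]
    norm_num [Finset.card_univ]
  -- entropy equality for every pair of coordinates
  have hpair : ∀ i j : Fin 5, i ≠ j →
      shannonEntropy 3 (μ'.map (fun x (t : {t // t ∈ ({i, j} : Finset (Fin 5))}) =>
        x ⟨t.1, Finset.mem_univ t.1⟩)) = shannonEntropy 3 μ' := by
    intro i j hij
    have h := hH ({i, j} : Finset (Fin 5))
    rw [hmarg] at h
    rw [h, H']
    have hc : ({i, j} : Finset (Fin 5)).card = 2 := by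
      rw [Finset.card_insert_of_notMem (by simpa using hij), Finset.card_singleton]
    rw [hc]
    norm_num
  -- the pair (0,1) marginal has full support
  have h01 : (0:Fin 5) ∈ ({0, 1} : Finset (Fin 5)) := by decide
  have h11 : (1:Fin 5) ∈ ({0, 1} : Finset (Fin 5)) := by decide
  set g0 := fun (x : {i // i ∈ (Finset.univ : Finset (Fin 5))} → Fin 3)
      (t : {t // t ∈ ({0, 1} : Finset (Fin 5))}) => x ⟨t.1, Finset.mem_univ t.1⟩ with hg0
  have hcard : Fintype.card ({t // t ∈ ({0, 1} : Finset (Fin 5))} → Fin 3) = 9 := by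
    rw [Fintype.card_fun, Fintype.card_coe]
    norm_num [show ({0, 1} : Finset (Fin 5)).card = 2 from by decide]
  have hlogb9 : Real.logb 3 (9:ℝ) = 2 := by
    rw [Real.logb, show (9:ℝ) = 3^(2:ℕ) by norm_num, Real.log_pow]
    have : Real.log 3 ≠ 0 := ne_of_gt (Real.log_pos (by norm_num))
    field_simp
    norm_num
  have hHν : shannonEntropy 3 (μ'.map g0)
      = Real.logb 3 (Fintype.card ({t // t ∈ ({0, 1} : Finset (Fin 5))} → Fin 3)) := by
    rw [hcard, hg0, hpair 0 1 (by decide)]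
    rw [H']
    push_cast
    rw [hlogb9]
  have hfull := U25full_support (μ'.map g0) hHν
  -- surjectivity: for every (a,b) ∈ Fin 3 × Fin 3 there is a support point with
  -- coordinates 0,1 equal to a,b
  have hsurj : ∀ a b : Fin 3, ∃ x, μ' x ≠ 0 ∧
      x ⟨0, Finset.mem_univ 0⟩ = a ∧ x ⟨1, Finset.mem_univ 1⟩ = b := by
    intro a b
    set y : {t // t ∈ ({0, 1} : Finset (Fin 5))} → Fin 3 :=
      fun t => if t.1 = 0 then a else b with hy
    have hν := hfull y
    have hνr : U25pr (μ'.map g0) y ≠ 0 := U25pr_ne_zero hν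
    rw [U25pr_map] at hνr
    obtain ⟨x, hxmem, hxne⟩ := Finset.exists_ne_zero_of_sum_ne_zero hνr
    simp only [Finset.mem_filter, Finset.mem_univ, true_and] at hxmem
    refine ⟨x, fun h0 => hxne (by simp [U25pr, h0]), ?_, ?_⟩
    · have := congrFun hxmem ⟨0, h01⟩
      simpa [hg0, hy] using this
    · have := congrFun hxmem ⟨1, h11⟩
      simpa [hg0, hy] using this
  choose E hE0 hEa hEb using hsurj
  -- injectivity on the support for every pair of coordinates
  have pairInj : ∀ i j : Fin 5, i ≠ j → ∀ a b a' b' : Fin 3,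
      E a b ⟨i, Finset.mem_univ i⟩ = E a' b' ⟨i, Finset.mem_univ i⟩ →
      E a b ⟨j, Finset.mem_univ j⟩ = E a' b' ⟨j, Finset.mem_univ j⟩ →
      E a b = E a' b' := by
    intro i j hij a b a' b' hFi hFj
    refine U25inj_on_supp (hpair i j hij) (hE0 a b) (hE0 a' b') ?_
    funext t
    obtain ⟨v, hv⟩ := t
    simp only [Finset.mem_insert, Finset.mem_singleton] at hv
    rcases hv with rfl | rfl
    · exact hFi
    · exact hFj
  -- row surjectivity for coordinates k ≠ 0
  have rowSurj : ∀ k : Fin 5, k ≠ 0 → ∀ a c : Fin 3,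
      ∃ w, E a w ⟨k, Finset.mem_univ k⟩ = c := by
    intro k hk a
    have hinj : Function.Injective (fun b => E a b ⟨k, Finset.mem_univ k⟩) := by
      intro b b' hbb
      have hE := pairInj 0 k (Ne.symm hk) a b a b'
        (by rw [hEa, hEa]) hbb
      have hcf := congrFun hE ⟨1, Finset.mem_univ 1⟩
      exact (hEb a b).symm.trans (hcf.trans (hEb a b'))
    exact Finite.injective_iff_surjective.mp hinj
  -- key: for each k ∉ {0,1}, a nonzero w_k with E 0 w_k and E 1 0 agreeing at k
  have key : ∀ k : Fin 5, k ≠ 0 → k ≠ 1 → ∃ w : Fin 3, w ≠ 0 ∧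
      E 0 w ⟨k, Finset.mem_univ k⟩ = E 1 0 ⟨k, Finset.mem_univ k⟩ := by
    intro k hk0 hk1
    obtain ⟨w, hw⟩ := rowSurj k hk0 0 (E 1 0 ⟨k, Finset.mem_univ k⟩)
    refine ⟨w, ?_, hw⟩
    rintro rfl
    have hE := pairInj 1 k (Ne.symm hk1) 0 0 1 0 (by rw [hEb, hEb]) hw
    have hcf := congrFun hE ⟨0, Finset.mem_univ 0⟩
    exact absurd ((hEa 0 0).symm.trans (hcf.trans (hEa 1 0))) (by decide)
  have hdist : ∀ k l : Fin 5, k ≠ l → ∀ w : Fin 3,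
      E 0 w ⟨k, Finset.mem_univ k⟩ = E 1 0 ⟨k, Finset.mem_univ k⟩ →
      E 0 w ⟨l, Finset.mem_univ l⟩ = E 1 0 ⟨l, Finset.mem_univ l⟩ → False := by
    intro k l hkl w h1 h2
    have hE := pairInj k l hkl 0 w 1 0 h1 h2
    have hcf := congrFun hE ⟨0, Finset.mem_univ 0⟩
    exact absurd ((hEa 0 w).symm.trans (hcf.trans (hEa 1 0))) (by decide)
  obtain ⟨w2, hw2ne, hw2⟩ := key 2 (by decide) (by decide)
  obtain ⟨w3, hw3ne, hw3⟩ := key 3 (by decide) (by decide)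
  obtain ⟨w4, hw4ne, hw4⟩ := key 4 (by decide) (by decide)
  have d23 : w2 ≠ w3 := by rintro rfl; exact hdist 2 3 (by decide) w2 hw2 hw3
  have d24 : w2 ≠ w4 := by rintro rfl; exact hdist 2 4 (by decide) w2 hw2 hw4
  have d34 : w3 ≠ w4 := by rintro rfl; exact hdist 3 4 (by decide) w3 hw3 hw4
  have b2 := w2.isLt; have b3 := w3.isLt; have b4 := w4.isLt
  have n2 : w2.val ≠ 0 := fun h => hw2ne (Fin.ext h)
  have n3 : w3.val ≠ 0 := fun h => hw3ne (Fin.ext h)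
  have n4 : w4.val ≠ 0 := fun h => hw4ne (Fin.ext h)
  have v23 : w2.val ≠ w3.val := fun h => d23 (Fin.ext h)
  have v24 : w2.val ≠ w4.val := fun h => d24 (Fin.ext h)
  have v34 : w3.val ≠ w4.val := fun h => d34 (Fin.ext h)
  omega
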